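/- arXiv:1510.04129 — 3 statements merged into one kernel-verified Lean document; each statement's English description precedes it below -/
import Mathlib

section
/- For all 1 ≤ i ≠ j ≤ n+1, the operator T_{i,j}∘T_{j,i} − T_{j,i}∘T_{i,j} on R equals the operator of multiplication by the polynomial h_i − h_j. -/
open MvPolynomial

/-- The generators `h_1, …, h_n` of `R = ℂ[h_1,…,h_n]`, together with
`h_{n+1} := -(h_1 + ⋯ + h_n)`.  Indices: `i : Fin (n+1)` with `(i : ℕ) < n`
corresponding to `h_1, …, h_n` and `i = Fin.last n` to `h_{n+1}`. -/
noncomputable def Hp (n : ℕ) (i : Fin (n + 1)) : MvPolynomial (Fin n) ℂ :=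
  if h : (i : ℕ) < n then X ⟨i, h⟩ else -∑ j : Fin n, X j

/-- The automorphism `σ_i` of `R` determined by `σ_i(h_k) = h_k - δ_{k,i}` for `1 ≤ i ≤ n`,
and `σ_{n+1} = id`. -/
noncomputable def sigma (n : ℕ) (i : Fin (n + 1)) :
    MvPolynomial (Fin n) ℂ ≃ₐ[ℂ] MvPolynomial (Fin n) ℂ :=
  if h : (i : ℕ) < n then
    AlgEquiv.ofAlgHom
      (aeval fun k => X k - if k = ⟨i, h⟩ then 1 else 0)
      (aeval fun k => X k + if k = ⟨i, h⟩ then 1 else 0)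
      (by ext k : 1; by_cases hk : k = ⟨i, h⟩ <;> simp [hk])
      (by ext k : 1; by_cases hk : k = ⟨i, h⟩ <;> simp [hk])
  else AlgEquiv.refl

/-- The operator `T_{i,j}` on `R`:
`T_{i,j}(f) = a_i a_j⁻¹ (δ_{i∈S} + δ_{i∉S}(h_i - b - 1)) (δ_{j∈S}(h_j - b) + δ_{j∉S}) σ_i(σ_j⁻¹(f))`. -/
noncomputable def T (n : ℕ) (b : ℂ) (S : Finset (Fin (n + 1))) (a : Fin (n + 1) → ℂ)
    (i j : Fin (n + 1)) (f : MvPolynomial (Fin n) ℂ) : MvPolynomial (Fin n) ℂ :=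
  (a i * (a j)⁻¹) • ((if i ∈ S then 1 else Hp n i - C b - 1)
    * (if j ∈ S then Hp n j - C b else 1) * sigma n i ((sigma n j).symm f))

lemma sig_apply (n : ℕ) (i k : Fin (n+1)) :
    sigma n i (Hp n k) = Hp n k - (if k = i then 1 else 0)
      + (if k = Fin.last n then 1 else 0) := by
  by_cases h : (i:ℕ) < n
  · rw [sigma, dif_pos h]
    by_cases hk : (k:ℕ) < n
    · have hkl : k ≠ Fin.last n := by
        intro e; rw [e] at hk; simp at hk
      have hik : ((⟨(k:ℕ), hk⟩ : Fin n) = ⟨(i:ℕ), h⟩) ↔ k = i := by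
        simp [Fin.ext_iff]
      simp only [Hp, dif_pos hk]
      simp [hik, hkl]
    · have hkl : k = Fin.last n := by
        apply Fin.ext; have := k.isLt; simp [Fin.last]; omega
      subst hkl
      have hki : Fin.last n ≠ i := by intro e; rw [← e] at h; simp [Fin.last] at h
      simp only [Hp, dif_neg hk]
      simp [hki, Finset.sum_sub_distrib]
      abel
  · have hi : i = Fin.last n := by
      apply Fin.ext; have := i.isLt; simp [Fin.last]; omega
    subst hi
    rw [sigma, dif_neg h]
    simp

lemma sig_symm_apply (n : ℕ) (i k : Fin (n+1)) :
    (sigma n i).symm (Hp n k) = Hp n k + (if k = i then 1 else 0)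
      - (if k = Fin.last n then 1 else 0) := by
  rw [(sigma n i).symm_apply_eq, map_sub, map_add, sig_apply]
  by_cases h1 : k = i <;> by_cases h2 : k = Fin.last n <;> simp [h1, h2] <;> abel

lemma sigma_C (n : ℕ) (i : Fin (n+1)) (c : ℂ) : sigma n i (C c) = C c := by
  rw [← MvPolynomial.algebraMap_eq]; exact (sigma n i).commutes c

lemma sigma_symm_C (n : ℕ) (i : Fin (n+1)) (c : ℂ) : (sigma n i).symm (C c) = C c := by
  rw [← MvPolynomial.algebraMap_eq]; exact (sigma n i).symm.commutes c

/-- For all `1 ≤ i ≠ j ≤ n+1`, the operator `T_{i,j} ∘ T_{j,i} - T_{j,i} ∘ T_{i,j}` on `R`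
is multiplication by the polynomial `h_i - h_j` (stated pointwise). -/
theorem statement6 (n : ℕ) (hn : 1 ≤ n) (b : ℂ) (S : Finset (Fin (n + 1)))
    (a : Fin (n + 1) → ℂ) (ha : ∀ j, a j ≠ 0) (halast : a (Fin.last n) = 1)
    (i j : Fin (n + 1)) (hij : i ≠ j) (f : MvPolynomial (Fin n) ℂ) :
    T n b S a i j (T n b S a j i f) - T n b S a j i (T n b S a i j f)
      = (Hp n i - Hp n j) * f := by
  have hinv : a i * (a j)⁻¹ * (a j * (a i)⁻¹) = 1 := by
    field_simp [ha i, ha j]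
  have hinv2 : a j * (a i)⁻¹ * (a i * (a j)⁻¹) = 1 := by rw [mul_comm]; exact hinv
  have hji : j ≠ i := hij.symm
  by_cases hi : i ∈ S <;> by_cases hj : j ∈ S <;>
  · simp only [T, hi, hj, if_true, if_false, map_smul, map_mul, map_sub, map_one,
      AlgEquiv.symm_apply_apply, AlgEquiv.apply_symm_apply,
      map_add, map_zero, apply_ite (⇑(sigma n i)), apply_ite (⇑(sigma n j)),
      sig_symm_apply, sig_apply, sigma_C, sigma_symm_C,
      if_pos rfl, if_neg hij, if_neg hji,
      mul_smul_comm, smul_mul_assoc, smul_smul, hinv, hinv2, one_smul]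
    ring
end

section
/- For all 1 ≤ i ≠ j ≤ n+1 and 1 ≤ k ≠ l ≤ n+1 with (k,l) ≠ (j,i), the operators on R satisfy T_{i,j}∘T_{k,l} − T_{k,l}∘T_{i,j} = δ_{j,k}·T_{i,l} − δ_{l,i}·T_{k,j}, where a term on the right-hand side is interpreted as the zero operator whenever its Kronecker delta coefficient is 0. -/
open MvPolynomial

/-- The operator `T_{i,j}` on `R`:
`T_{i,j}(f) = a_i a_j⁻¹ (δ_{i∈S} + δ_{i∉S}(h_i - b - 1)) (δ_{j∈S}(h_j - b) + δ_{j∉S}) σ_i(σ_j⁻¹(f))`. -/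
lemma sigma_X (n : ℕ) (i : Fin (n+1)) (m : Fin n) :
    sigma n i (X m) = X m - C (if (m : ℕ) = (i : ℕ) then 1 else 0) := by
  unfold sigma
  split
  · next h =>
    show (aeval fun k => X k - if k = ⟨i, h⟩ then 1 else 0) (X m) = _
    rw [aeval_X]
    by_cases hm : m = ⟨i, h⟩
    · simp [hm]
    · have : (m:ℕ) ≠ (i:ℕ) := by
        intro hc; exact hm (Fin.ext hc)
      simp [hm, this]
  · next h =>
    have : (m:ℕ) ≠ (i:ℕ) := by omega
    simp [this]

lemma sigma_symm_X (n : ℕ) (i : Fin (n+1)) (m : Fin n) :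
    (sigma n i).symm (X m) = X m + C (if (m : ℕ) = (i : ℕ) then 1 else 0) := by
  unfold sigma
  split
  · next h =>
    show (aeval fun k => X k + if k = ⟨i, h⟩ then 1 else 0) (X m) = _
    rw [aeval_X]
    by_cases hm : m = ⟨i, h⟩
    · simp [hm]
    · have : (m:ℕ) ≠ (i:ℕ) := by intro hc; exact hm (Fin.ext hc)
      simp [hm, this]
  · next h =>
    have : (m:ℕ) ≠ (i:ℕ) := by omega
    simp [this]
variable (n : ℕ)

lemma sigma_C' (φ : MvPolynomial (Fin n) ℂ ≃ₐ[ℂ] MvPolynomial (Fin n) ℂ) (x : ℂ) :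
    φ (C x) = C x := by
  rw [← MvPolynomial.algebraMap_eq]; exact φ.commutes x

lemma comm_aux (φ ψ : MvPolynomial (Fin n) ℂ ≃ₐ[ℂ] MvPolynomial (Fin n) ℂ)
    (cφ cψ : Fin n → ℂ)
    (hφ : ∀ m, φ (X m) = X m + C (cφ m)) (hψ : ∀ m, ψ (X m) = X m + C (cψ m))
    (g : MvPolynomial (Fin n) ℂ) : φ (ψ g) = ψ (φ g) := by
  induction g using MvPolynomial.induction_on with
  | C x => rw [sigma_C' n ψ, sigma_C' n φ, sigma_C' n ψ]
  | add p q hp hq => rw [map_add, map_add, hp, hq, map_add, map_add]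
  | mul_X p m hp =>
      simp only [map_mul, map_add, hφ, hψ, sigma_C', hp]
      ring

lemma sigma_X' (n : ℕ) (i : Fin (n+1)) (m : Fin n) :
    sigma n i (X m) = X m + C (-(if (m : ℕ) = (i : ℕ) then 1 else 0)) := by
  rw [sigma_X, map_neg]; ring

lemma comm_ss (n : ℕ) (i k : Fin (n+1)) (g : MvPolynomial (Fin n) ℂ) :
    sigma n i (sigma n k g) = sigma n k (sigma n i g) :=
  comm_aux n _ _ _ _ (sigma_X' n i) (sigma_X' n k) g

lemma comm_s_symm (n : ℕ) (i k : Fin (n+1)) (g : MvPolynomial (Fin n) ℂ) :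
    sigma n i ((sigma n k).symm g) = (sigma n k).symm (sigma n i g) :=
  comm_aux n _ _ _ _ (sigma_X' n i) (sigma_symm_X n k) g

lemma comm_symm_symm (n : ℕ) (i k : Fin (n+1)) (g : MvPolynomial (Fin n) ℂ) :
    (sigma n i).symm ((sigma n k).symm g) = (sigma n k).symm ((sigma n i).symm g) :=
  comm_aux n _ _ _ _ (sigma_symm_X n i) (sigma_symm_X n k) g

lemma quad_comm (n : ℕ) (i j k l : Fin (n+1)) (g : MvPolynomial (Fin n) ℂ) :
    sigma n i ((sigma n j).symm (sigma n k ((sigma n l).symm g)))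
      = sigma n k ((sigma n l).symm (sigma n i ((sigma n j).symm g))) := by
  rw [← comm_s_symm n k j, comm_ss n i k, comm_symm_symm n j l, comm_s_symm n i l]

lemma sigma_Hp (n : ℕ) (i p : Fin (n+1)) :
    sigma n i (Hp n p)
      = Hp n p + C ((if p = Fin.last n then 1 else 0) - (if p = i then 1 else 0)) := by
  unfold Hp
  split
  · next h =>
    rw [sigma_X]
    have hpl : p ≠ Fin.last n := by
      intro hc; rw [hc] at h; simp [Fin.last] at h
    have : ((⟨(p:ℕ), h⟩ : Fin n) : ℕ) = (p:ℕ) := rfl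
    have hiff : (((⟨(p:ℕ), h⟩ : Fin n) : ℕ) = (i:ℕ)) ↔ p = i := by
      rw [this, Fin.ext_iff]
    by_cases hpi : p = i
    · simp only [hpl, hpi, if_neg (show ¬(i = Fin.last n) from fun hc => hpl (hpi ▸ hc)), if_pos rfl, hiff, map_sub, map_zero, map_one]
      ring
    · have : ((⟨(p:ℕ), h⟩ : Fin n) : ℕ) ≠ (i:ℕ) := fun hc => hpi (hiff.mp hc)
      simp [hpl, hpi, this]
  · next h =>
    have hpl : p = Fin.last n := by
      have := p.isLt; apply Fin.ext; simp [Fin.last]; omega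
    rw [map_neg, map_sum]
    simp only [sigma_X]
    rw [Finset.sum_sub_distrib, ← map_sum]
    have hsum : (∑ m : Fin n, if ((m:ℕ) = (i:ℕ)) then (1:ℂ) else 0)
        = if (i:ℕ) < n then 1 else 0 := by
      by_cases hi : (i:ℕ) < n
      · rw [if_pos hi]
        rw [Finset.sum_congr rfl (g := fun m => if m = (⟨i, hi⟩ : Fin n) then (1:ℂ) else 0)]
        · simp
        · intro m _
          congr 1
          simp [Fin.ext_iff]
      · rw [if_neg hi]
        apply Finset.sum_eq_zero
        intro m _
        have : (m:ℕ) ≠ (i:ℕ) := by have := m.isLt; omega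
        simp [this]
    rw [hsum, hpl]
    by_cases hi : (i:ℕ) < n
    · have : Fin.last n ≠ i := by
        intro hc; rw [← hc] at hi; simp [Fin.last] at hi
      simp [this, hi]
      ring
    · have : Fin.last n = i := by
        apply Fin.ext; have := i.isLt; simp [Fin.last]; omega
      simp [this, hi]

lemma sigma_symm_Hp (n : ℕ) (i p : Fin (n+1)) :
    (sigma n i).symm (Hp n p)
      = Hp n p - C ((if p = Fin.last n then 1 else 0) - (if p = i then 1 else 0)) := by
  have h1 := congrArg (sigma n i).symm (sigma_Hp n i p)
  rw [AlgEquiv.symm_apply_apply, map_add, sigma_C' n (sigma n i).symm] at h1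
  linear_combination -h1

lemma tau_Hp (n : ℕ) (i j p : Fin (n+1)) :
    sigma n i ((sigma n j).symm (Hp n p))
      = Hp n p + C ((if p = j then 1 else 0) - (if p = i then 1 else 0)) := by
  rw [sigma_symm_Hp, map_sub, sigma_Hp, sigma_C' n (sigma n i)]
  rw [show ((if p = j then (1:ℂ) else 0) - (if p = i then 1 else 0))
      = ((if p = Fin.last n then 1 else 0) - (if p = i then 1 else 0))
        - ((if p = Fin.last n then 1 else 0) - (if p = j then 1 else 0)) by ring, map_sub]
  simp only [map_sub]
  ring

lemma tau_P (n : ℕ) (b : ℂ) (S : Finset (Fin (n+1))) (i j m : Fin (n+1)) :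
    sigma n i ((sigma n j).symm (if m ∈ S then 1 else Hp n m - C b - 1))
      = if m ∈ S then 1
        else Hp n m + C ((if m = j then 1 else 0) - (if m = i then 1 else 0)) - C b - 1 := by
  split
  · rw [map_one, map_one]
  · simp only [map_sub, map_one, sigma_C', tau_Hp]

lemma tau_Q (n : ℕ) (b : ℂ) (S : Finset (Fin (n+1))) (i j m : Fin (n+1)) :
    sigma n i ((sigma n j).symm (if m ∈ S then Hp n m - C b else 1))
      = if m ∈ S then Hp n m + C ((if m = j then 1 else 0) - (if m = i then 1 else 0)) - C b
        else 1 := by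
  split
  · simp only [map_sub, sigma_C', tau_Hp]
  · rw [map_one, map_one]

lemma TT_eq (n : ℕ) (b : ℂ) (S : Finset (Fin (n + 1))) (a : Fin (n + 1) → ℂ)
    (i j k l : Fin (n + 1)) (f : MvPolynomial (Fin n) ℂ) :
    T n b S a i j (T n b S a k l f)
      = ((a i * (a j)⁻¹) * (a k * (a l)⁻¹)) •
        ((if i ∈ S then 1 else Hp n i - C b - 1)
          * (if j ∈ S then Hp n j - C b else 1)
          * (sigma n i ((sigma n j).symm (if k ∈ S then 1 else Hp n k - C b - 1))
            * sigma n i ((sigma n j).symm (if l ∈ S then Hp n l - C b else 1))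
            * sigma n i ((sigma n j).symm (sigma n k ((sigma n l).symm f))))) := by
  simp only [T, map_smul, map_mul, mul_smul_comm, smul_smul]

lemma scal (a1 a2 a3 : ℂ) (h2 : a2 ≠ 0) : a1 * a2⁻¹ * (a2 * a3⁻¹) = a1 * a3⁻¹ := by
  rw [show a1 * a2⁻¹ * (a2 * a3⁻¹) = a1 * a3⁻¹ * (a2⁻¹ * a2) by ring,
    inv_mul_cancel₀ h2, mul_one]

set_option maxHeartbeats 2000000 in
/-- For all `1 ≤ i ≠ j ≤ n+1` and `1 ≤ k ≠ l ≤ n+1` with `(k,l) ≠ (j,i)`: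
`T_{i,j} ∘ T_{k,l} - T_{k,l} ∘ T_{i,j} = δ_{j,k} T_{i,l} - δ_{l,i} T_{k,j}` (stated pointwise;
a term with vanishing Kronecker delta coefficient is the zero operator). -/
theorem statement7 (n : ℕ) (hn : 1 ≤ n) (b : ℂ) (S : Finset (Fin (n + 1)))
    (a : Fin (n + 1) → ℂ) (ha : ∀ j, a j ≠ 0) (halast : a (Fin.last n) = 1)
    (i j k l : Fin (n + 1)) (hij : i ≠ j) (hkl : k ≠ l) (hne : (k, l) ≠ (j, i))
    (f : MvPolynomial (Fin n) ℂ) :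
    T n b S a i j (T n b S a k l f) - T n b S a k l (T n b S a i j f)
      = (if j = k then (1 : ℂ) else 0) • T n b S a i l f
        - (if l = i then (1 : ℂ) else 0) • T n b S a k j f := by
  rw [TT_eq, TT_eq]
  simp only [T]
  by_cases hjk : j = k
  · -- Case A : j = k, hence l ≠ i
    subst hjk
    have hli : l ≠ i := by intro h; exact hne (by rw [h])
    rw [if_pos rfl, if_neg hli, one_smul, zero_smul, sub_zero,
      AlgEquiv.symm_apply_apply, quad_comm n j l i j f, AlgEquiv.symm_apply_apply]
    rw [scal (a i) (a j) (a l) (ha j),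
      show a j * (a l)⁻¹ * (a i * (a j)⁻¹) = a i * (a j)⁻¹ * (a j * (a l)⁻¹) by ring,
      scal (a i) (a j) (a l) (ha j), ← smul_sub]
    congr 1
    rw [tau_P, tau_Q, tau_P, tau_Q]
    simp [hij, hij.symm, hkl, hkl.symm, hli, Ne.symm hli]
    split_ifs <;>
      first
      | ring
      | (simp only [zero_sub, sub_zero, sub_self, map_neg, map_one, map_zero, C_1, C_0]; ring)
  · by_cases hli : l = i
    · -- Case B : l = i (i gets replaced by l), j ≠ k
      subst hli
      have hkj : k ≠ j := fun h => hjk h.symm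
      rw [if_neg hjk, if_pos rfl, one_smul, zero_smul, zero_sub,
        quad_comm n l j k l f, AlgEquiv.symm_apply_apply]
      rw [show a l * (a j)⁻¹ * (a k * (a l)⁻¹) = a k * (a l)⁻¹ * (a l * (a j)⁻¹) by ring,
        scal (a k) (a l) (a j) (ha l), ← smul_sub, ← smul_neg]
      congr 1
      rw [tau_P, tau_Q, tau_P, tau_Q]
      simp [hij, hij.symm, hkl, hkl.symm, hjk, hkj]
      split_ifs <;>
        first
        | ring
        | (simp only [zero_sub, sub_zero, sub_self, map_neg, map_one, map_zero, C_1, C_0]; ring)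
    · -- Case C : j ≠ k and l ≠ i
      rw [if_neg hjk, if_neg hli, zero_smul, zero_smul, sub_zero,
        quad_comm n k l i j f,
        show a k * (a l)⁻¹ * (a i * (a j)⁻¹) = a i * (a j)⁻¹ * (a k * (a l)⁻¹) by ring,
        ← smul_sub]
      have hE : ∀ E1 E2 : MvPolynomial (Fin n) ℂ, E1 = E2 →
          (a i * (a j)⁻¹ * (a k * (a l)⁻¹)) • (E1 - E2) = 0 := by
        intro E1 E2 h; rw [h, sub_self, smul_zero]
      apply hE
      rw [tau_P, tau_Q, tau_P, tau_Q]
      have hkj : k ≠ j := fun h => hjk h.symm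
      have hil : i ≠ l := fun h => hli h.symm
      by_cases hik : i = k
      · subst hik
        by_cases hjl : j = l
        · subst hjl
          simp [hij, hij.symm, hkl, hkl.symm, hjk, hkj, hli, hil]
          all_goals (split_ifs <;>
            first
            | ring
            | (simp only [zero_sub, sub_zero, sub_self, map_neg, map_one, map_zero, C_1, C_0]; ring))
        · simp [hij, hij.symm, hkl, hkl.symm, hjk, hkj, hli, hil, hjl, Ne.symm hjl]
          all_goals (split_ifs <;>
            first
            | ring
            | (simp only [zero_sub, sub_zero, sub_self, map_neg, map_one, map_zero, C_1, C_0]; ring))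
      · by_cases hjl : j = l
        · subst hjl
          simp [hij, hij.symm, hkl, hkl.symm, hjk, hkj, hli, hil, hik, Ne.symm hik]
          all_goals (split_ifs <;>
            first
            | ring
            | (simp only [zero_sub, sub_zero, sub_self, map_neg, map_one, map_zero, C_1, C_0]; ring))
        · simp [hij, hij.symm, hkl, hkl.symm, hjk, hkj, hli, hil, hik, Ne.symm hik,
            hjl, Ne.symm hjl]
          all_goals (split_ifs <;>
            first
            | ring
            | (simp only [zero_sub, sub_zero, sub_self, map_neg, map_one, map_zero, C_1, C_0]; ring))
end

section
/- Suppose n+1 ∈ S, and let m̄ ∈ ℤ_{≥0}^{n+1} and N ∈ ℤ_{≥0} with N ≥ |m̄| + 1. Then the following identities hold in R: for every 1 ≤ j ≤ n, a_j^{−1}·(m_j+1)·σ_j^{−1}(P'_{m̄+ε_j}(S,a)) = (h_{n+1} − b − 1)·Δ_{m̄}(S,a) if j ∈ S, and a_j^{−1}·(m_j+1)·σ_j^{−1}(P'_{m̄+ε_j}(S,a)) = (h_j − b)·(h_{n+1} − b − 1)·Δ_{m̄}(S,a) if j ∉ S; moreover (m_{n+1}+1)·P'_{m̄+ε_{n+1}}(S,a)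 = (h_{n+1} + nb)·Δ_{m̄}(S,a). -/
open MvPolynomial

/-- The scalar `a^{m̄}/m̄!`. -/
noncomputable def coef (n : ℕ) (a : Fin (n + 1) → ℂ) (m : Fin (n + 1) → ℕ) : ℂ :=
  (∏ j, a j ^ m j) / ((∏ j, (m j).factorial : ℕ) : ℂ)

/-- `P_{m̄}(S,a) = (a^{m̄}/m̄!) ∏_{s ∉ S} ∏_{k=1}^{m_s} (h_s - b - k)`. -/
noncomputable def Pm (n : ℕ) (b : ℂ) (S : Finset (Fin (n + 1))) (a : Fin (n + 1) → ℂ)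
    (m : Fin (n + 1) → ℕ) : MvPolynomial (Fin n) ℂ :=
  coef n a m • ∏ s ∈ Sᶜ, ∏ k ∈ Finset.range (m s), (Hp n s - C (b + k + 1))

/-- `P'_{m̄}(S,a) = (a^{m̄}/m̄!) ∏_{s∉S, s≠n+1} ∏_{k=1}^{m_s}(h_s - b - k) ⋅ C ⋅`
`∏_{t=1}^{m_{n+1}}(h_{n+1} + nb - t + 1)`, where
`C = ∏_{r=1}^{N-m_{n+1}}(h_{n+1} - b - 1 + r)` if `n+1 ∈ S` and `C = 1` otherwise. -/
noncomputable def P' (n : ℕ) (b : ℂ) (S : Finset (Fin (n + 1))) (a : Fin (n + 1) → ℂ)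
    (N : ℕ) (m : Fin (n + 1) → ℕ) : MvPolynomial (Fin n) ℂ :=
  coef n a m •
    ((∏ s ∈ Sᶜ.erase (Fin.last n), ∏ k ∈ Finset.range (m s), (Hp n s - C (b + k + 1)))
      * (if Fin.last n ∈ S then
            ∏ r ∈ Finset.range (N - m (Fin.last n)), (Hp n (Fin.last n) - C (b - r))
          else 1)
      * ∏ t ∈ Finset.range (m (Fin.last n)), (Hp n (Fin.last n) + C ((n : ℂ) * b - t)))

/-- `Δ_{m̄}(S,a) = (a^{m̄}/m̄!) ∏_{s∉S} ∏_{k=1}^{m_s}(h_s - b - k) ⋅`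
`∏_{r=2}^{N-m_{n+1}}(h_{n+1} - b - 2 + r) ⋅ ∏_{t=1}^{m_{n+1}}(h_{n+1} + nb - t)`. -/
noncomputable def Δm (n : ℕ) (b : ℂ) (S : Finset (Fin (n + 1))) (a : Fin (n + 1) → ℂ)
    (N : ℕ) (m : Fin (n + 1) → ℕ) : MvPolynomial (Fin n) ℂ :=
  coef n a m •
    ((∏ s ∈ Sᶜ, ∏ k ∈ Finset.range (m s), (Hp n s - C (b + k + 1)))
      * (∏ r ∈ Finset.range (N - m (Fin.last n) - 1), (Hp n (Fin.last n) - C (b - r)))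
      * ∏ t ∈ Finset.range (m (Fin.last n)), (Hp n (Fin.last n) + C ((n : ℂ) * b - t - 1)))

/-- `Θ_{m̄}(S,a) = (a^{m̄}/m̄!) ∏_{s∉S, s≠n+1} ∏_{k=1}^{m_s}(h_s - b - k) ⋅`
`∏_{k=1}^{m_{n+1}}(h_{n+1} - b - k - 1)`. -/
noncomputable def Θm (n : ℕ) (b : ℂ) (S : Finset (Fin (n + 1))) (a : Fin (n + 1) → ℂ)
    (m : Fin (n + 1) → ℕ) : MvPolynomial (Fin n) ℂ :=
  coef n a m •
    ((∏ s ∈ Sᶜ.erase (Fin.last n), ∏ k ∈ Finset.range (m s), (Hp n s - C (b + k + 1)))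
      * ∏ k ∈ Finset.range (m (Fin.last n)), (Hp n (Fin.last n) - C (b + k + 2)))

/-- `Υ_{m̄}(S,a) = (a^{m̄}/m̄!) ∏_{s∉S, s≠n+1} ∏_{k=1}^{m_s}(h_s - b - k) ⋅`
`∏_{t=1}^{m_{n+1}}(h_{n+1} + nb - t)`. -/
noncomputable def Υm (n : ℕ) (b : ℂ) (S : Finset (Fin (n + 1))) (a : Fin (n + 1) → ℂ)
    (m : Fin (n + 1) → ℕ) : MvPolynomial (Fin n) ℂ :=
  coef n a m •
    ((∏ s ∈ Sᶜ.erase (Fin.last n), ∏ k ∈ Finset.range (m s), (Hp n s - C (b + k + 1)))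
      * ∏ t ∈ Finset.range (m (Fin.last n)), (Hp n (Fin.last n) + C ((n : ℂ) * b - t - 1)))

/-- `h̄_i = h_i - δ_{i,n+1}`. -/
noncomputable def Hbar (n : ℕ) (i : Fin (n + 1)) : MvPolynomial (Fin n) ℂ :=
  Hp n i - if i = Fin.last n then 1 else 0

/-- The `(n+1) × (n+1)` matrix `A(λ,b,S,N)` with entries in `R`:
`A_{ii} = h̄_i - λ - N + 2` and, for `i ≠ j`,
`A_{ij} = (δ_{i∈S} + δ_{i∉S}(h̄_i - b)) (δ_{j∈S}(h̄_j - b) + δ_{j∉S})`. -/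
noncomputable def Amat (n : ℕ) (lam b : ℂ) (S : Finset (Fin (n + 1))) (N : ℕ) :
    Matrix (Fin (n + 1)) (Fin (n + 1)) (MvPolynomial (Fin n) ℂ) :=
  fun i j =>
    if i = j then Hbar n i - C (lam + N - 2)
    else (if i ∈ S then 1 else Hbar n i - C b) * (if j ∈ S then Hbar n j - C b else 1)


lemma sigma_symm_apply (n : ℕ) (j : Fin (n+1)) (h : (j : ℕ) < n) (p : MvPolynomial (Fin n) ℂ) :
    (sigma n j).symm p = aeval (fun k => X k + if k = ⟨j, h⟩ then (1 : MvPolynomial (Fin n) ℂ) else 0) p := by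
  rw [sigma, dif_pos h, AlgEquiv.ofAlgHom_symm_apply]

lemma tau_Hp_lt (n : ℕ) (j : Fin (n+1)) (hj : (j:ℕ) < n) (s : Fin (n+1)) (hs : (s:ℕ) < n) :
    aeval (fun k => X k + if k = ⟨j, hj⟩ then (1 : MvPolynomial (Fin n) ℂ) else 0) (Hp n s)
      = Hp n s + if s = j then 1 else 0 := by
  simp only [Hp]; rw [dif_pos hs, aeval_X]
  congr 1
  by_cases h : s = j
  · simp [h]
  · rw [if_neg h, if_neg]; intro hc; exact h (Fin.ext (by simpa using congrArg Fin.val hc))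

lemma tau_Hp_last (n : ℕ) (j : Fin (n+1)) (hj : (j:ℕ) < n) :
    aeval (fun k => X k + if k = ⟨j, hj⟩ then (1 : MvPolynomial (Fin n) ℂ) else 0) (Hp n (Fin.last n))
      = Hp n (Fin.last n) - 1 := by
  simp only [Hp, dif_neg (lt_irrefl n), Fin.val_last]
  rw [map_neg, map_sum]
  simp only [aeval_X]
  rw [Finset.sum_add_distrib, Finset.sum_ite_eq' Finset.univ (⟨j, hj⟩ : Fin n)]
  simp
  ring

lemma coef_step (n : ℕ) (a : Fin (n+1) → ℂ) (m : Fin (n+1) → ℕ) (j : Fin (n+1)) (haj : a j ≠ 0) :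
    (a j)⁻¹ * ((m j : ℂ) + 1) * coef n a (fun l => m l + if l = j then 1 else 0)
      = coef n a m := by
  have h1 : (∏ l, a l ^ (m l + if l = j then 1 else 0)) = (∏ l, a l ^ m l) * a j := by
    rw [← Finset.mul_prod_erase Finset.univ _ (Finset.mem_univ j),
        ← Finset.mul_prod_erase Finset.univ (fun l => a l ^ m l) (Finset.mem_univ j)]
    rw [Finset.prod_congr rfl (fun l hl => by
      rw [if_neg (Finset.ne_of_mem_erase hl), add_zero])]
    rw [if_pos rfl, pow_succ]
    ring
  have h2 : (∏ l, (m l + if l = j then 1 else 0).factorial)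
      = (m j + 1) * ∏ l, (m l).factorial := by
    rw [← Finset.mul_prod_erase Finset.univ _ (Finset.mem_univ j),
        ← Finset.mul_prod_erase Finset.univ (fun l => (m l).factorial) (Finset.mem_univ j)]
    rw [Finset.prod_congr rfl (fun l hl => by
      rw [if_neg (Finset.ne_of_mem_erase hl), add_zero])]
    rw [if_pos rfl, Nat.factorial_succ]
    ring
  have hf : (∏ i : Fin (n+1), ((m i).factorial : ℂ)) ≠ 0 :=
    Finset.prod_ne_zero_iff.2 fun l _ => Nat.cast_ne_zero.2 (Nat.factorial_ne_zero _)
  have hm1 : ((m j : ℂ) + 1) ≠ 0 := Nat.cast_add_one_ne_zero (m j)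
  rw [coef, coef, h1, h2]
  push_cast
  field_simp

lemma tau_prod_fixed (n : ℕ) (j : Fin (n+1)) (hj : (j:ℕ) < n) (s : Fin (n+1)) (hs : (s:ℕ) < n)
    (hsj : s ≠ j) (M : ℕ) (g : ℕ → ℂ) :
    aeval (fun k => X k + if k = ⟨j, hj⟩ then (1:MvPolynomial (Fin n) ℂ) else 0)
      (∏ k ∈ Finset.range M, (Hp n s - C (g k))) = ∏ k ∈ Finset.range M, (Hp n s - C (g k)) := by
  rw [map_prod]
  refine Finset.prod_congr rfl fun k _ => ?_
  rw [map_sub, tau_Hp_lt n j hj s hs, if_neg hsj, add_zero, aeval_C, algebraMap_eq]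

lemma val_lt_of_ne_last (n : ℕ) (s : Fin (n+1)) (h : s ≠ Fin.last n) : (s:ℕ) < n := by
  have h1 := s.isLt
  have h2 : (s:ℕ) ≠ n := fun hc => h (Fin.ext (by simp [hc]))
  omega

lemma hB_gen (n : ℕ) (j : Fin (n+1)) (hj : (j:ℕ) < n) (b : ℂ) (K : ℕ) :
    aeval (fun k => X k + if k = ⟨j, hj⟩ then (1:MvPolynomial (Fin n) ℂ) else 0)
      (∏ r ∈ Finset.range (K+1), (Hp n (Fin.last n) - C (b - (r:ℂ))))
    = (Hp n (Fin.last n) - C b - 1) * ∏ r ∈ Finset.range K, (Hp n (Fin.last n) - C (b - (r:ℂ))) := by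
  rw [map_prod]
  calc (∏ r ∈ Finset.range (K+1),
        aeval (fun k => X k + if k = ⟨j, hj⟩ then (1:MvPolynomial (Fin n) ℂ) else 0)
          (Hp n (Fin.last n) - C (b - (r:ℂ))))
      = ∏ r ∈ Finset.range (K+1), (Hp n (Fin.last n) - 1 - C (b - (r:ℂ))) := by
        refine Finset.prod_congr rfl fun r _ => ?_
        rw [map_sub, tau_Hp_last n j hj, aeval_C, algebraMap_eq]
    _ = (∏ r ∈ Finset.range K, (Hp n (Fin.last n) - 1 - C (b - (((r:ℕ)+1:ℕ):ℂ))))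
          * (Hp n (Fin.last n) - 1 - C (b - ((0:ℕ):ℂ))) := Finset.prod_range_succ' _ _
    _ = (∏ r ∈ Finset.range K, (Hp n (Fin.last n) - C (b - (r:ℂ))))
          * (Hp n (Fin.last n) - C b - 1) := by
        rw [Nat.cast_zero, sub_zero]
        have h1 : (∏ r ∈ Finset.range K, (Hp n (Fin.last n) - 1 - C (b - (((r:ℕ)+1:ℕ):ℂ))))
            = ∏ r ∈ Finset.range K, (Hp n (Fin.last n) - C (b - (r:ℂ))) := by
          refine Finset.prod_congr rfl fun r _ => ?_
          have h2 : (b - (((r:ℕ)+1:ℕ):ℂ)) = (b - (r:ℂ)) - 1 := by push_cast; ring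
          rw [h2, map_sub, map_one]
          ring
        rw [h1]
        ring
    _ = _ := mul_comm _ _

lemma hAj_gen (n : ℕ) (j : Fin (n+1)) (hj : (j:ℕ) < n) (b : ℂ) (M : ℕ) :
    aeval (fun k => X k + if k = ⟨j, hj⟩ then (1:MvPolynomial (Fin n) ℂ) else 0)
      (∏ k ∈ Finset.range (M+1), (Hp n j - C (b + (k:ℂ) + 1)))
    = (Hp n j - C b) * ∏ k ∈ Finset.range M, (Hp n j - C (b + (k:ℂ) + 1)) := by
  rw [map_prod]
  calc (∏ x ∈ Finset.range (M+1),
        aeval (fun k => X k + if k = ⟨j, hj⟩ then (1:MvPolynomial (Fin n) ℂ) else 0)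
          (Hp n j - C (b + (x:ℂ) + 1)))
      = ∏ x ∈ Finset.range (M+1), (Hp n j - C (b + (x:ℂ))) := by
        refine Finset.prod_congr rfl fun x _ => ?_
        rw [map_sub, tau_Hp_lt n j hj j hj, if_pos rfl, aeval_C, algebraMap_eq]
        have h2 : (b + (x:ℂ) + 1) = (b + (x:ℂ)) + 1 := rfl
        rw [h2, map_add, map_one]
        ring
    _ = (∏ x ∈ Finset.range M, (Hp n j - C (b + (((x:ℕ)+1:ℕ):ℂ))))
          * (Hp n j - C (b + ((0:ℕ):ℂ))) := Finset.prod_range_succ' _ _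
    _ = (∏ x ∈ Finset.range M, (Hp n j - C (b + (x:ℂ) + 1))) * (Hp n j - C b) := by
        rw [Nat.cast_zero, add_zero]
        have h1 : (∏ x ∈ Finset.range M, (Hp n j - C (b + (((x:ℕ)+1:ℕ):ℂ))))
            = ∏ x ∈ Finset.range M, (Hp n j - C (b + (x:ℂ) + 1)) := by
          refine Finset.prod_congr rfl fun x _ => ?_
          have h2 : (b + (((x:ℕ)+1:ℕ):ℂ)) = b + (x:ℂ) + 1 := by push_cast; ring
          rw [h2]
        rw [h1]
    _ = _ := mul_comm _ _

/-- Lemma 7(1), second family of identities (`n+1 ∈ S`, `N ≥ |m̄| + 1`): for `1 ≤ j ≤ n`,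
`a_j⁻¹ (m_j+1) σ_j⁻¹(P'_{m̄+ε_j}(S,a)) = (h_{n+1} - b - 1) Δ_{m̄}(S,a)` if `j ∈ S`,
`= (h_j - b)(h_{n+1} - b - 1) Δ_{m̄}(S,a)` if `j ∉ S`; moreover
`(m_{n+1}+1) P'_{m̄+ε_{n+1}}(S,a) = (h_{n+1} + nb) Δ_{m̄}(S,a)`. -/
theorem statement13 (n : ℕ) (hn : 1 ≤ n) (b : ℂ) (S : Finset (Fin (n + 1)))
    (a : Fin (n + 1) → ℂ) (ha : ∀ j, a j ≠ 0) (halast : a (Fin.last n) = 1)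
    (hS : Fin.last n ∈ S) (m : Fin (n + 1) → ℕ) (N : ℕ) (hN : (∑ j, m j) + 1 ≤ N) :
    (∀ j : Fin (n + 1), (j : ℕ) < n →
      ((a j)⁻¹ * (m j + 1 : ℂ)) •
          (sigma n j).symm (P' n b S a N (fun l => m l + if l = j then 1 else 0))
        = if j ∈ S then (Hp n (Fin.last n) - C b - 1) * Δm n b S a N m
          else (Hp n j - C b) * ((Hp n (Fin.last n) - C b - 1) * Δm n b S a N m)) ∧
    (m (Fin.last n) + 1 : ℂ) •
        P' n b S a N (fun l => m l + if l = Fin.last n then 1 else 0)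
      = (Hp n (Fin.last n) + C ((n : ℂ) * b)) * Δm n b S a N m := by
  classical
  have hSc : Sᶜ.erase (Fin.last n) = Sᶜ :=
    Finset.erase_eq_of_notMem (by simp [hS])
  have hlastN : m (Fin.last n) < N := by
    have h1 : m (Fin.last n) ≤ ∑ j, m j :=
      Finset.single_le_sum (fun i _ => Nat.zero_le _) (Finset.mem_univ _)
    omega
  constructor
  · intro j hj
    have hjlast : j ≠ Fin.last n := by
      intro h; rw [h, Fin.val_last] at hj; exact lt_irrefl n hj
    have hB : aeval (fun k => X k + if k = ⟨(j:ℕ), hj⟩ then (1:MvPolynomial (Fin n) ℂ) else 0)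
        (∏ r ∈ Finset.range (N - m (Fin.last n)), (Hp n (Fin.last n) - C (b - (r:ℂ))))
        = (Hp n (Fin.last n) - C b - 1)
          * ∏ r ∈ Finset.range (N - m (Fin.last n) - 1), (Hp n (Fin.last n) - C (b - (r:ℂ))) := by
      conv_lhs => rw [show N - m (Fin.last n) = (N - m (Fin.last n) - 1) + 1 by omega]
      exact hB_gen n j hj b _
    have hD : aeval (fun k => X k + if k = ⟨(j:ℕ), hj⟩ then (1:MvPolynomial (Fin n) ℂ) else 0)
        (∏ t ∈ Finset.range (m (Fin.last n)), (Hp n (Fin.last n) + C ((n:ℂ) * b - (t:ℂ))))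
        = ∏ t ∈ Finset.range (m (Fin.last n)), (Hp n (Fin.last n) + C ((n:ℂ) * b - (t:ℂ) - 1)) := by
      rw [map_prod]
      refine Finset.prod_congr rfl fun t _ => ?_
      have hC : C ((n:ℂ) * b - (t:ℂ) - 1) = C ((n:ℂ) * b - (t:ℂ)) - (1 : MvPolynomial (Fin n) ℂ) := by
        rw [map_sub, map_one]
      rw [map_add, tau_Hp_last n j hj, aeval_C, algebraMap_eq, hC]
      ring
    rw [sigma_symm_apply n j hj]
    simp only [P', Δm, hS, if_true]
    simp only [if_neg (Ne.symm hjlast), add_zero]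
    rw [map_smul, map_mul, map_mul, smul_smul, coef_step n a m j (ha j), hB, hD]
    by_cases hjS : j ∈ S
    · have hA : aeval (fun k => X k + if k = ⟨(j:ℕ), hj⟩ then (1:MvPolynomial (Fin n) ℂ) else 0)
          (∏ s ∈ Sᶜ.erase (Fin.last n), ∏ k ∈ Finset.range (m s + if s = j then 1 else 0),
            (Hp n s - C (b + (k:ℂ) + 1)))
          = ∏ s ∈ Sᶜ, ∏ k ∈ Finset.range (m s), (Hp n s - C (b + (k:ℂ) + 1)) := by
        rw [map_prod]
        calc (∏ s ∈ Sᶜ.erase (Fin.last n),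
              aeval (fun k => X k + if k = ⟨(j:ℕ), hj⟩ then (1:MvPolynomial (Fin n) ℂ) else 0)
                (∏ k ∈ Finset.range (m s + if s = j then 1 else 0), (Hp n s - C (b + (k:ℂ) + 1))))
            = ∏ s ∈ Sᶜ.erase (Fin.last n), ∏ k ∈ Finset.range (m s), (Hp n s - C (b + (k:ℂ) + 1)) := by
              refine Finset.prod_congr rfl fun s hsmem => ?_
              obtain ⟨hs1, hs2c⟩ := Finset.mem_erase.1 hsmem
              have hs2 : s ∉ S := Finset.mem_compl.1 hs2c
              have hsj : s ≠ j := fun h => hs2 (h ▸ hjS)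
              rw [if_neg hsj, add_zero]
              exact tau_prod_fixed n j hj s (val_lt_of_ne_last n s hs1) hsj (m s) _
          _ = _ := by rw [hSc]
      rw [hA, if_pos hjS, mul_smul_comm]
      congr 1
      ring
    · have hjmem : j ∈ Sᶜ.erase (Fin.last n) :=
        Finset.mem_erase.2 ⟨hjlast, Finset.mem_compl.2 hjS⟩
      have hrest : (∏ s ∈ (Sᶜ.erase (Fin.last n)).erase j,
            aeval (fun k => X k + if k = ⟨(j:ℕ), hj⟩ then (1:MvPolynomial (Fin n) ℂ) else 0)
              (∏ k ∈ Finset.range (m s + if s = j then 1 else 0), (Hp n s - C (b + (k:ℂ) + 1))))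
          = ∏ s ∈ (Sᶜ.erase (Fin.last n)).erase j,
              ∏ k ∈ Finset.range (m s), (Hp n s - C (b + (k:ℂ) + 1)) := by
        refine Finset.prod_congr rfl fun s hsmem => ?_
        have hsj : s ≠ j := Finset.ne_of_mem_erase hsmem
        have hs1 : s ≠ Fin.last n := Finset.ne_of_mem_erase (Finset.mem_of_mem_erase hsmem)
        rw [if_neg hsj, add_zero]
        exact tau_prod_fixed n j hj s (val_lt_of_ne_last n s hs1) hsj (m s) _
      have hcomb : (∏ k ∈ Finset.range (m j), (Hp n j - C (b + (k:ℂ) + 1)))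
            * ∏ s ∈ (Sᶜ.erase (Fin.last n)).erase j,
                ∏ k ∈ Finset.range (m s), (Hp n s - C (b + (k:ℂ) + 1))
          = ∏ s ∈ Sᶜ, ∏ k ∈ Finset.range (m s), (Hp n s - C (b + (k:ℂ) + 1)) :=
        (Finset.mul_prod_erase (Sᶜ.erase (Fin.last n))
          (fun s => ∏ k ∈ Finset.range (m s), (Hp n s - C (b + (k:ℂ) + 1))) hjmem).trans
          (by rw [hSc])
      have hA : aeval (fun k => X k + if k = ⟨(j:ℕ), hj⟩ then (1:MvPolynomial (Fin n) ℂ) else 0)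
          (∏ s ∈ Sᶜ.erase (Fin.last n), ∏ k ∈ Finset.range (m s + if s = j then 1 else 0),
            (Hp n s - C (b + (k:ℂ) + 1)))
          = (Hp n j - C b) * ∏ s ∈ Sᶜ, ∏ k ∈ Finset.range (m s), (Hp n s - C (b + (k:ℂ) + 1)) := by
        rw [← Finset.mul_prod_erase _ _ hjmem, map_mul, if_pos rfl, hAj_gen n j hj b (m j),
          map_prod, hrest, mul_assoc, hcomb]
      rw [hA, if_neg hjS, mul_smul_comm, mul_smul_comm]
      congr 1
      ring
  · simp only [P', Δm, hS, if_true]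
    rw [show N - (m (Fin.last n) + 1) = N - m (Fin.last n) - 1 by omega]
    have eqA : (∏ s ∈ Sᶜ.erase (Fin.last n), ∏ k ∈ Finset.range
          (m s + if s = Fin.last n then 1 else 0), (Hp n s - C (b + (k:ℂ) + 1)))
        = ∏ s ∈ Sᶜ, ∏ k ∈ Finset.range (m s), (Hp n s - C (b + (k:ℂ) + 1)) :=
      (Finset.prod_congr rfl fun s hsmem => by
        rw [if_neg (Finset.ne_of_mem_erase hsmem), add_zero]).trans (by rw [hSc])
    have eqD : (∏ t ∈ Finset.range (m (Fin.last n) + 1), (Hp n (Fin.last n) + C ((n:ℂ) * b - (t:ℂ))))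
        = (∏ t ∈ Finset.range (m (Fin.last n)), (Hp n (Fin.last n) + C ((n:ℂ) * b - (t:ℂ) - 1)))
          * (Hp n (Fin.last n) + C ((n:ℂ) * b)) := by
      calc (∏ t ∈ Finset.range (m (Fin.last n) + 1), (Hp n (Fin.last n) + C ((n:ℂ) * b - (t:ℂ))))
          = (∏ t ∈ Finset.range (m (Fin.last n)),
              (Hp n (Fin.last n) + C ((n:ℂ) * b - (((t:ℕ)+1:ℕ):ℂ))))
            * (Hp n (Fin.last n) + C ((n:ℂ) * b - ((0:ℕ):ℂ))) := Finset.prod_range_succ' _ _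
        _ = _ := by
            rw [Nat.cast_zero, sub_zero]
            have h1 : (∏ t ∈ Finset.range (m (Fin.last n)),
                (Hp n (Fin.last n) + C ((n:ℂ) * b - (((t:ℕ)+1:ℕ):ℂ))))
                = ∏ t ∈ Finset.range (m (Fin.last n)),
                    (Hp n (Fin.last n) + C ((n:ℂ) * b - (t:ℂ) - 1)) := by
              refine Finset.prod_congr rfl fun t _ => ?_
              have h2 : ((n:ℂ) * b - (((t:ℕ)+1:ℕ):ℂ)) = (n:ℂ) * b - (t:ℂ) - 1 := by
                push_cast; ring
              rw [h2]
            rw [h1]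
    rw [eqA, eqD, smul_smul]
    have hcl : ((m (Fin.last n) : ℂ) + 1) *
        coef n a (fun l => m l + if l = Fin.last n then 1 else 0) = coef n a m := by
      have h := coef_step n a m (Fin.last n) (ha _)
      rw [halast] at h
      simpa using h
    rw [hcl, mul_smul_comm]
    congr 1
    ring
end
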